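/- Assume γ(0) = 0. Then there exists ρ₀ > 0 such that for every ρ ∈ (0, ρ₀), H¹(Γ ∩ B_ρ(0)) ≤ ρ + ρ² · sup_{t ∈ [0,L]} ‖γ''(t)‖. -/

import Mathlib

open MeasureTheory Filter Set Topology

lemma arith_aux (M ρ t : ℝ) (hM0 : 0 ≤ M) (hρ0 : 0 < ρ) (hMρ : M * ρ ≤ 1/3)
    (hMt : M * t ≤ 1/3) (hts : ρ + ρ^2 * M ≤ t) : ρ ≤ t - M/2 * t^2 := by
  have hρt : ρ ≤ t := by nlinarith
  have haux1 : 0 ≤ 2 - M * (t + (ρ + ρ^2 * M)) := by nlinarith [sq_nonneg (M * ρ)]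
  have step1 : (ρ + ρ^2*M) - M/2 * (ρ + ρ^2*M)^2 ≤ t - M/2 * t^2 := by
    nlinarith [mul_nonneg (sub_nonneg.2 hts) haux1]
  have haux2 : 0 ≤ 1/2 - M*ρ - (M*ρ)^2/2 := by nlinarith [mul_nonneg hM0 hρ0.le]
  have step2 : ρ ≤ (ρ + ρ^2*M) - M/2 * (ρ + ρ^2*M)^2 := by
    nlinarith [mul_nonneg (mul_nonneg hM0 (sq_nonneg ρ)) haux2]
  linarith

/-- Lemma 2.6 (single-curve case, Eq. (2.4)): if `γ : [0,L] → ℝ²` is an injective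
`C²` curve parametrized by arclength with `γ(0) = 0` and image `Γ`, then there exists
`ρ₀ > 0` such that `H¹(Γ ∩ B_ρ(0)) ≤ ρ + ρ² sup_{[0,L]} ‖γ''‖` for every `ρ ∈ (0, ρ₀)`. -/
theorem stmt6 (L : ℝ) (hL : 0 < L) (γ : ℝ → EuclideanSpace ℝ (Fin 2))
    (hsmooth : ContDiffOn ℝ 2 γ (Set.Icc 0 L))
    (hinj : Set.InjOn γ (Set.Icc 0 L))
    (harc : ∀ t ∈ Set.Icc (0:ℝ) L, ‖derivWithin γ (Set.Icc 0 L) t‖ = 1)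
    (h0 : γ 0 = 0) :
    ∃ ρ₀ > (0:ℝ), ∀ ρ ∈ Set.Ioo (0:ℝ) ρ₀,
      μH[1] (γ '' Set.Icc 0 L ∩ Metric.ball (0 : EuclideanSpace ℝ (Fin 2)) ρ)
        ≤ ENNReal.ofReal (ρ + ρ ^ 2 *
            ⨆ t : Set.Icc (0:ℝ) L,
              ‖derivWithin (derivWithin γ (Set.Icc 0 L)) (Set.Icc 0 L) (t : ℝ)‖) := by
  set s : Set ℝ := Set.Icc 0 L with hs
  have hud : UniqueDiffOn ℝ s := uniqueDiffOn_Icc hL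
  set g1 : ℝ → EuclideanSpace ℝ (Fin 2) := derivWithin γ s with hg1
  set g2 : ℝ → EuclideanSpace ℝ (Fin 2) := derivWithin g1 s with hg2
  have hg1C1 : ContDiffOn ℝ 1 g1 s := hsmooth.derivWithin hud (by norm_num)
  have hg1diff : DifferentiableOn ℝ g1 s := hg1C1.differentiableOn one_ne_zero
  have hg2cont : ContinuousOn g2 s := by
    exact hg1C1.continuousOn_derivWithin hud le_rfl
  -- M
  set M : ℝ := ⨆ t : s, ‖g2 (t:ℝ)‖ with hM
  have hbdd : BddAbove (Set.range fun t : s => ‖g2 (t:ℝ)‖) := by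
    have h1 : (Set.range fun t : s => ‖g2 (t:ℝ)‖) = (fun t => ‖g2 t‖) '' s := by
      ext x; simp [Set.image_eq_range]
    rw [h1]
    exact (isCompact_Icc.image_of_continuousOn hg2cont.norm).bddAbove
  have hM0 : 0 ≤ M := Real.iSup_nonneg fun t => norm_nonneg _
  have hMle : ∀ t ∈ s, ‖g2 t‖ ≤ M := fun t ht => le_ciSup hbdd ⟨t, ht⟩
  -- Lipschitz
  have hlip : LipschitzOnWith 1 γ s := by
    apply (convex_Icc 0 L).lipschitzOnWith_of_nnnorm_derivWithin_le
      (hsmooth.differentiableOn (by norm_num))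
    intro x hx
    simp only [← NNReal.coe_le_coe, coe_nnnorm, NNReal.coe_one]
    exact (harc x hx).le
  -- MVT on g1 : ‖g1 x - g1 0‖ ≤ M x
  have hmvt : ∀ x ∈ s, ‖g1 x - g1 0‖ ≤ M * (x - 0) := by
    apply norm_image_sub_le_of_norm_deriv_le_segment' (f' := g2)
    · exact fun x hx => (hg1diff x hx).hasDerivWithinAt
    · exact fun x hx => hMle x (Set.mem_Icc.2 ⟨hx.1, hx.2.le⟩)
  -- quadratic bound
  have htaylor : ∀ t ∈ s, ‖γ t - t • g1 0‖ ≤ M / 2 * t ^ 2 := by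
    intro t ht
    refine image_norm_le_of_norm_deriv_right_le_deriv_boundary
        (f := fun u => γ u - u • g1 0) (f' := fun u => g1 u - g1 0)
        (B := fun u => M / 2 * u ^ 2) (B' := fun u => M * u) ?_ ?_ ?_ ?_ ?_ ht
    · exact ((hsmooth.continuousOn).sub
        ((continuousOn_id.smul continuousOn_const)))
    · intro x hx
      have hxs : x ∈ s := ⟨hx.1, hx.2.le⟩
      have hd : HasDerivWithinAt γ (g1 x) s x :=
        ((hsmooth.differentiableOn (by norm_num)) x hxs).hasDerivWithinAt
      have hd2 : HasDerivWithinAt γ (g1 x) (Set.Icc x L) x :=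
        hd.mono (Set.Icc_subset_Icc hx.1 le_rfl)
      have hd3 : HasDerivWithinAt γ (g1 x) (Set.Ici x) x :=
        hd2.mono_of_mem_nhdsWithin (Icc_mem_nhdsGE_of_mem ⟨le_rfl, hx.2⟩)
      have hid : HasDerivWithinAt (fun u : ℝ => u • g1 0) ((1:ℝ) • g1 0) (Set.Ici x) x :=
        (hasDerivWithinAt_id x _).smul_const (g1 0)
      convert hd3.sub hid using 1
      · rfl
      · simp
    · simp [h0]
    · intro x
      have : HasDerivAt (fun u : ℝ => M / 2 * u ^ 2) (M / 2 * (2 * x)) x := by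
        simpa using (hasDerivAt_pow 2 x).const_mul (M / 2)
      convert this using 1; ring
    · intro x hx
      have := hmvt x ⟨hx.1, hx.2.le⟩
      simpa using this
  have hlower : ∀ t ∈ s, t - M / 2 * t ^ 2 ≤ ‖γ t‖ := by
    intro t ht
    have h1 : ‖(t : ℝ) • g1 0‖ = t := by
      rw [norm_smul, harc 0 (Set.mem_Icc.2 ⟨le_rfl, hL.le⟩)]
      simp [abs_of_nonneg ht.1]
    have h2 := htaylor t ht
    have h3 := norm_sub_norm_le ((t:ℝ) • g1 0) ((t:ℝ) • g1 0 - γ t)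
    rw [norm_sub_rev] at h2
    have : ‖(t:ℝ) • g1 0 - ((t:ℝ) • g1 0 - γ t)‖ = ‖γ t‖ := by
      congr 1; abel
    rw [this, h1] at h3
    linarith
  -- delta and minimum
  set δ : ℝ := min L (1 / (3 * (M + 1))) with hδdef
  have hx3 : (0:ℝ) < 3 * (M + 1) := by positivity
  have hδpos : 0 < δ := lt_min hL (by positivity)
  have hδL : δ ≤ L := min_le_left _ _
  have hδM : M * δ ≤ 1 / 3 := by
    have h1 : δ ≤ 1 / (3 * (M + 1)) := min_le_right _ _
    have h2 : M * δ ≤ M * (1 / (3 * (M + 1))) := mul_le_mul_of_nonneg_left h1 hM0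
    have h3 : M * (1 / (3 * (M + 1))) ≤ 1 / 3 := by
      rw [mul_one_div, div_le_div_iff₀ hx3 (by norm_num : (0:ℝ) < 3)]
      nlinarith
    linarith
  have hcont : ContinuousOn (fun t => ‖γ t‖) (Set.Icc δ L) :=
    (hsmooth.continuousOn.mono (Set.Icc_subset_Icc hδpos.le le_rfl)).norm
  obtain ⟨x₀, hx₀, hmin⟩ :=
    isCompact_Icc.exists_isMinOn (Set.nonempty_Icc.2 hδL) hcont
  set m : ℝ := ‖γ x₀‖ with hmdef
  have hmpos : 0 < m := by
    rcases eq_or_lt_of_le (norm_nonneg (γ x₀)) with h | h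
    · exfalso
      have hx₀s : x₀ ∈ s := ⟨hδpos.le.trans hx₀.1, hx₀.2⟩
      have h0s : (0:ℝ) ∈ s := ⟨le_rfl, hL.le⟩
      have : γ x₀ = γ 0 := by
        rw [h0]; exact (norm_eq_zero.mp h.symm)
      have := hinj hx₀s h0s this
      linarith [hx₀.1, hδpos]
    · exact h
  refine ⟨min m (3 / 4 * δ), lt_min hmpos (by positivity), ?_⟩
  intro ρ hρ
  obtain ⟨hρ0, hρlt⟩ := hρ
  have hρm : ρ < m := hρlt.trans_le (min_le_left _ _)
  have hρδ : ρ < 3 / 4 * δ := hρlt.trans_le (min_le_right _ _)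
  have hρδ' : ρ ≤ δ := by linarith
  have hMρ : M * ρ ≤ 1 / 3 := by
    have := mul_le_mul_of_nonneg_left hρδ' hM0; linarith
  -- key inclusion
  have hsub : ∀ t ∈ s, γ t ∈ Metric.ball (0 : EuclideanSpace ℝ (Fin 2)) ρ →
      t ≤ ρ + ρ ^ 2 * M := by
    intro t ht hb
    have hnorm : ‖γ t‖ < ρ := by simpa [mem_ball_zero_iff] using hb
    have htδ : t ≤ δ := by
      by_contra hgt
      push_neg at hgt
      have : m ≤ ‖γ t‖ := isMinOn_iff.mp hmin t ⟨hgt.le, ht.2⟩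
      linarith
    by_contra hgt
    push_neg at hgt
    have hlow := hlower t ht
    have hMt : M * t ≤ 1 / 3 := by
      have := mul_le_mul_of_nonneg_left htδ hM0; linarith
    have := arith_aux M ρ t hM0 hρ0 hMρ hMt hgt.le
    linarith
  have himg : γ '' s ∩ Metric.ball (0 : EuclideanSpace ℝ (Fin 2)) ρ ⊆
      γ '' (s ∩ Set.Icc 0 (ρ + ρ ^ 2 * M)) := by
    rintro y ⟨⟨t, ht, rfl⟩, hb⟩
    exact ⟨t, ⟨ht, ⟨ht.1, hsub t ht hb⟩⟩, rfl⟩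
  have hle := (hlip.mono (Set.inter_subset_left (s := s)
      (t := Set.Icc 0 (ρ + ρ ^ 2 * M)))).hausdorffMeasure_image_le
      (le_of_lt one_pos)
  simp only [NNReal.coe_one, ENNReal.coe_one, ENNReal.one_rpow, one_mul] at hle
  calc μH[1] (γ '' s ∩ Metric.ball (0 : EuclideanSpace ℝ (Fin 2)) ρ)
      ≤ μH[1] (γ '' (s ∩ Set.Icc 0 (ρ + ρ ^ 2 * M))) := measure_mono himg
    _ ≤ μH[1] (s ∩ Set.Icc 0 (ρ + ρ ^ 2 * M)) := hle
    _ ≤ μH[1] (Set.Icc (0:ℝ) (ρ + ρ ^ 2 * M)) := measure_mono Set.inter_subset_right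
    _ = volume (Set.Icc (0:ℝ) (ρ + ρ ^ 2 * M)) := by
        rw [MeasureTheory.hausdorffMeasure_real]
    _ = ENNReal.ofReal (ρ + ρ ^ 2 * M - 0) := Real.volume_Icc
    _ = ENNReal.ofReal (ρ + ρ ^ 2 * M) := by norm_num
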